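/- arXiv:1811.04485 — 2 statements merged into one kernel-verified Lean document; each statement's English description precedes it below -/
import Mathlib

section
/- Let Σ be a finite simplicial complex and let L be an exhausting coreduction-based removal sequence on Σ. Then the reversed list of L is an exhausting reduction-based removal sequence on Σ: starting again from remaining family Σ, each pair occurring in the reversed list is a reduction pair in the current remaining family, and each single simplex occurring in the reversed list is top in the current remaining family. In particular, the same set of pairs (hence the same Forman gradient) and the same set of single (critical) simplices are produced. (Proposition 1, reverse direction.) -/
open Finset

variable {α : Type*}

/-- `σ` is an immediate face of `τ`. -/
def ImmFace (σ τ : Finset α) : Prop :=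
  σ ⊆ τ ∧ σ.card + 1 = τ.card

/-- A simplicial complex: a family of nonempty finsets closed under nonempty subsets. -/
def IsComplex (S : Set (Finset α)) : Prop :=
  (∀ σ ∈ S, σ.Nonempty) ∧ ∀ τ ∈ S, ∀ σ : Finset α, σ ⊆ τ → σ.Nonempty → σ ∈ S

/-- Immediate boundary of `τ` in the family `S`. -/
def bd (S : Set (Finset α)) (τ : Finset α) : Set (Finset α) :=
  {σ ∈ S | ImmFace σ τ}

/-- Immediate coboundary of `σ` in the family `S`. -/
def cbd (S : Set (Finset α)) (σ : Finset α) : Set (Finset α) :=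
  {τ ∈ S | ImmFace σ τ}

/-- `(σ, τ)` is a coreduction pair in `S`. -/
def CoredPair (S : Set (Finset α)) (σ τ : Finset α) : Prop :=
  σ ∈ S ∧ τ ∈ S ∧ ImmFace σ τ ∧ bd S τ = {σ}

/-- `(σ, τ)` is a reduction pair in `S`. -/
def RedPair (S : Set (Finset α)) (σ τ : Finset α) : Prop :=
  σ ∈ S ∧ τ ∈ S ∧ ImmFace σ τ ∧ cbd S σ = {τ}

/-- `σ` is a free simplex in `S`. -/
def FreeSimplex (S : Set (Finset α)) (σ : Finset α) : Prop :=
  σ ∈ S ∧ bd S σ = ∅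

/-- `σ` is a top simplex in `S`. -/
def TopSimplex (S : Set (Finset α)) (σ : Finset α) : Prop :=
  σ ∈ S ∧ cbd S σ = ∅

/-- `S'` is an upward-closed subfamily of `S`. -/
def UpClosedIn (S S' : Set (Finset α)) : Prop :=
  S' ⊆ S ∧ ∀ σ ∈ S', ∀ τ ∈ S, σ ⊆ τ → τ ∈ S'

/-- An operation: removal of a pair of simplices, or of a single simplex. -/
abbrev Op (α : Type*) := (Finset α × Finset α) ⊕ Finset α

/-- Excise the simplices of an operation from a family. -/
def removeOp (S : Set (Finset α)) : Op α → Set (Finset α)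
  | Sum.inl (σ, τ) => S \ {σ, τ}
  | Sum.inr σ => S \ {σ}

/-- Remaining family after performing a list of operations in order. -/
def remaining (S : Set (Finset α)) (L : List (Op α)) : Set (Finset α) :=
  L.foldl removeOp S

/-- A coreduction-based removal sequence: every pair is a coreduction pair and
every single simplex is free, in the current remaining family. -/
def IsCoredSeq (S : Set (Finset α)) : List (Op α) → Prop
  | [] => True
  | o :: L =>
      (match o with
        | Sum.inl (σ, τ) => CoredPair S σ τ
        | Sum.inr σ => FreeSimplex S σ) ∧ IsCoredSeq (removeOp S o) L

/-- A reduction-based removal sequence: every pair is a reduction pair and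
every single simplex is top, in the current remaining family. -/
def IsRedSeq (S : Set (Finset α)) : List (Op α) → Prop
  | [] => True
  | o :: L =>
      (match o with
        | Sum.inl (σ, τ) => RedPair S σ τ
        | Sum.inr σ => TopSimplex S σ) ∧ IsRedSeq (removeOp S o) L

/-- A valid interleaved removal sequence: every pair is a coreduction or
reduction pair, and every single simplex is free or top, in the current
remaining family. -/
def IsInterSeq (S : Set (Finset α)) : List (Op α) → Prop
  | [] => True
  | o :: L =>
      (match o with
        | Sum.inl (σ, τ) => CoredPair S σ τ ∨ RedPair S σ τ
        | Sum.inr σ => FreeSimplex S σ ∨ TopSimplex S σ) ∧ IsInterSeq (removeOp S o) L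

/-- A discrete vector field on `S`: pairs (face, immediate coface) of simplices of `S`,
each simplex of `S` belonging to at most one pair. -/
def IsDVF (S : Set (Finset α)) (V : Set (Finset α × Finset α)) : Prop :=
  (∀ p ∈ V, p.1 ∈ S ∧ p.2 ∈ S ∧ ImmFace p.1 p.2) ∧
  ∀ σ ∈ S, ∀ p ∈ V, ∀ q ∈ V,
    (σ = p.1 ∨ σ = p.2) → (σ = q.1 ∨ σ = q.2) → p = q

/-- A `V`-path: a nonempty sequence of pairs of `V` such that each `σ_{i+1}` is an
immediate face of `τ_i` different from `σ_i`. -/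
def IsVPath (V : Set (Finset α × Finset α)) (P : List (Finset α × Finset α)) : Prop :=
  P ≠ [] ∧ (∀ p ∈ P, p ∈ V) ∧
  P.Chain' (fun p q => ImmFace q.1 p.2 ∧ q.1 ≠ p.1)

/-- A closed `V`-path: `σ_1` is an immediate face of `τ_r` different from `σ_r`. -/
def IsClosedVPath (V : Set (Finset α × Finset α))
    (P : List (Finset α × Finset α)) : Prop :=
  ∃ hne : P ≠ [], IsVPath V P ∧
    ImmFace (P.head hne).1 (P.getLast hne).2 ∧
    (P.head hne).1 ≠ (P.getLast hne).1

/-- The lower star of a vertex `v` with respect to a vertex function `F`. -/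
def lowerStar (S : Set (Finset α)) (F : α → ℝ) (v : α) : Set (Finset α) :=
  {σ ∈ S | v ∈ σ ∧ ∀ w ∈ σ, F v ≤ F w}

/-- Condition on the head operation of a coreduction sequence. -/
def CoredCond (S : Set (Finset α)) : Op α → Prop
  | Sum.inl (σ, τ) => CoredPair S σ τ
  | Sum.inr σ => FreeSimplex S σ

/-- Condition on the head operation of a reduction sequence. -/
def RedCond (S : Set (Finset α)) : Op α → Prop
  | Sum.inl (σ, τ) => RedPair S σ τ
  | Sum.inr σ => TopSimplex S σ

lemma remaining_append (S : Set (Finset α)) (M N : List (Op α)) :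
    remaining S (M ++ N) = remaining (remaining S M) N :=
  List.foldl_append

lemma isRedSeq_snoc (S : Set (Finset α)) (M : List (Op α)) (o : Op α)
    (h1 : IsRedSeq S M) (h2 : RedCond (remaining S M) o) :
    IsRedSeq S (M ++ [o]) := by
  induction M generalizing S with
  | nil =>
    cases o with
    | inl p => obtain ⟨σ, τ⟩ := p; exact ⟨h2, trivial⟩
    | inr σ => exact ⟨h2, trivial⟩
  | cons a M ih =>
    exact ⟨h1.1, ih _ h1.2 h2⟩

lemma exists_imm_face {S T : Set (Finset α)} [DecidableEq α] (hS : IsComplex S)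
    (hT : UpClosedIn S T) {ρ τ : Finset α} (hρ : ρ ∈ T) (hτ : τ ∈ S)
    (hsub : ρ ⊆ τ) (hne : ρ ≠ τ) :
    ∃ ν, ν ∈ T ∧ ρ ⊆ ν ∧ ImmFace ν τ := by
  obtain ⟨x, hxτ, hxρ⟩ := Finset.exists_of_ssubset (hsub.ssubset_of_ne hne)
  have hρν : ρ ⊆ τ.erase x := Finset.subset_erase.2 ⟨hsub, hxρ⟩
  have hνS : τ.erase x ∈ S :=
    hS.2 τ hτ _ (Finset.erase_subset x τ) ((hS.1 ρ (hT.1 hρ)).mono hρν)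
  exact ⟨τ.erase x, hT.2 ρ hρ _ hνS hρν, hρν,
    Finset.erase_subset x τ, Finset.card_erase_add_one hxτ⟩

lemma no_proper_sub {S T : Set (Finset α)} [DecidableEq α] (hS : IsComplex S)
    (hT : UpClosedIn S T) {σ : Finset α} (hσ : σ ∈ S) (hbd : bd T σ = ∅) :
    ∀ ρ ∈ T, ρ ⊆ σ → ρ = σ := by
  intro ρ hρ hsub
  by_contra hne
  obtain ⟨ν, hνT, _, hface⟩ := exists_imm_face hS hT hρ hσ hsub hne
  have : ν ∈ bd T σ := ⟨hνT, hface⟩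
  rw [hbd] at this
  exact this

lemma cored_bd_sigma {S T : Set (Finset α)} [DecidableEq α] (hS : IsComplex S)
    (hT : UpClosedIn S T) {σ τ : Finset α} (hc : CoredPair T σ τ) :
    bd T σ = ∅ := by
  obtain ⟨hσT, hτT, ⟨hστ, hcard⟩, hbd⟩ := hc
  rw [Set.eq_empty_iff_forall_notMem]
  rintro ρ ⟨hρT, hρσ, hρcard⟩
  have hss : σ ⊂ τ := hστ.ssubset_of_ne (by intro h; rw [h] at hcard; omega)
  obtain ⟨v, hvτ, hvσ⟩ := Finset.exists_of_ssubset hss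
  have hvρ : v ∉ ρ := fun h => hvσ (hρσ h)
  have hμτ : insert v ρ ⊆ τ := Finset.insert_subset hvτ (hρσ.trans hστ)
  have hμS : insert v ρ ∈ S :=
    hS.2 τ (hT.1 hτT) _ hμτ ⟨v, Finset.mem_insert_self v ρ⟩
  have hμT : insert v ρ ∈ T := hT.2 ρ hρT _ hμS (Finset.subset_insert v ρ)
  have hμcard : (insert v ρ).card + 1 = τ.card := by
    rw [Finset.card_insert_of_notMem hvρ]; omega
  have : insert v ρ ∈ bd T τ := ⟨hμT, hμτ, hμcard⟩
  rw [hbd] at this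
  exact hvσ (this ▸ Finset.mem_insert_self v ρ)

lemma cored_sub_tau {S T : Set (Finset α)} [DecidableEq α] (hS : IsComplex S)
    (hT : UpClosedIn S T) {σ τ : Finset α} (hc : CoredPair T σ τ) :
    ∀ ρ ∈ T, ρ ⊆ τ → ρ = σ ∨ ρ = τ := by
  intro ρ hρ hsub
  by_cases hne : ρ = τ
  · exact Or.inr hne
  obtain ⟨ν, hνT, hρν, hface⟩ := exists_imm_face hS hT hρ (hT.1 hc.2.1) hsub hne
  have : ν ∈ bd T τ := ⟨hνT, hface⟩
  rw [hc.2.2.2] at this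
  have hρσ : ρ ⊆ σ := this ▸ hρν
  exact Or.inl (no_proper_sub hS hT (hT.1 hc.1) (cored_bd_sigma hS hT hc) ρ hρ hρσ)

lemma upClosed_removeOp {S T : Set (Finset α)} [DecidableEq α] (hS : IsComplex S)
    (hT : UpClosedIn S T) (o : Op α) (ho : CoredCond T o) :
    UpClosedIn S (removeOp T o) := by
  cases o with
  | inl p =>
    obtain ⟨σ, τ⟩ := p
    have hc : CoredPair T σ τ := ho
    refine ⟨fun ρ hρ => hT.1 hρ.1, ?_⟩
    rintro ρ ⟨hρT, hρP⟩ μ hμS hρμ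
    have hμT : μ ∈ T := hT.2 ρ hρT μ hμS hρμ
    refine ⟨hμT, ?_⟩
    rintro (rfl | rfl)
    · exact hρP (Or.inl (no_proper_sub hS hT (hT.1 hc.1) (cored_bd_sigma hS hT hc) ρ hρT hρμ))
    · rcases cored_sub_tau hS hT hc ρ hρT hρμ with h | h
      · exact hρP (Or.inl h)
      · exact hρP (Or.inr h)
  | inr σ =>
    have hc : FreeSimplex T σ := ho
    refine ⟨fun ρ hρ => hT.1 hρ.1, ?_⟩
    rintro ρ ⟨hρT, hρP⟩ μ hμS hρμ
    have hμT : μ ∈ T := hT.2 ρ hρT μ hμS hρμ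
    refine ⟨hμT, ?_⟩
    rintro rfl
    exact hρP (no_proper_sub hS hT (hT.1 hc.1) hc.2 ρ hρT hρμ)

lemma diff_diff_cancel {X : Type*} {A T P : Set X} (hP : P ⊆ T) :
    (A \ (T \ P)) \ P = A \ T := by
  ext x
  simp only [Set.mem_diff]
  constructor
  · rintro ⟨⟨h1, h2⟩, h3⟩
    exact ⟨h1, fun h => h2 ⟨h, h3⟩⟩
  · rintro ⟨h1, h2⟩
    exact ⟨⟨h1, fun h => h2 h.1⟩, fun hp => h2 (hP hp)⟩

lemma key_lemma {α : Type*} [DecidableEq α] (S : Set (Finset α)) (hS : IsComplex S) :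
    ∀ L : List (Op α), ∀ T : Set (Finset α), UpClosedIn S T →
      IsCoredSeq T L → remaining T L = ∅ →
      IsRedSeq S L.reverse ∧ remaining S L.reverse = S \ T := by
  intro L
  induction L with
  | nil =>
    intro T _ _ hrem
    have hT0 : T = ∅ := hrem
    subst hT0
    exact ⟨trivial, by simp [remaining]⟩
  | cons o L ih =>
    intro T hT hseq hrem
    have hhead : CoredCond T o := by
      cases o with
      | inl p => obtain ⟨σ, τ⟩ := p; exact hseq.1
      | inr σ => exact hseq.1
    have hT' : UpClosedIn S (removeOp T o) := upClosed_removeOp hS hT o hhead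
    obtain ⟨hrs, hrem'⟩ := ih (removeOp T o) hT' hseq.2 hrem
    rw [List.reverse_cons]
    have hcond : RedCond (S \ removeOp T o) o := by
      cases o with
      | inl p =>
        obtain ⟨σ, τ⟩ := p
        have hc : CoredPair T σ τ := hhead
        obtain ⟨hσT, hτT, hface, _⟩ := hc
        refine ⟨⟨hT.1 hσT, fun h => h.2 (Or.inl rfl)⟩,
          ⟨hT.1 hτT, fun h => h.2 (Or.inr rfl)⟩, hface, ?_⟩
        ext ρ
        constructor
        · rintro ⟨⟨hρS, hρT'⟩, hρface⟩
          have hρT : ρ ∈ T := hT.2 σ hσT ρ hρS hρface.1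
          have hρP : ρ ∈ ({σ, τ} : Set (Finset α)) := by
            by_contra h; exact hρT' ⟨hρT, h⟩
          rcases hρP with rfl | rfl
          · exact absurd hρface.2 (by omega)
          · rfl
        · rintro rfl
          exact ⟨⟨hT.1 hτT, fun h => h.2 (Or.inr rfl)⟩, hface⟩
      | inr σ =>
        have hc : FreeSimplex T σ := hhead
        refine ⟨⟨hT.1 hc.1, fun h => h.2 rfl⟩, ?_⟩
        rw [Set.eq_empty_iff_forall_notMem]
        rintro ρ ⟨⟨hρS, hρT'⟩, hρface⟩
        have hρT : ρ ∈ T := hT.2 σ hc.1 ρ hρS hρface.1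
        have : ρ = σ := by by_contra h; exact hρT' ⟨hρT, h⟩
        subst this
        exact absurd hρface.2 (by omega)
    constructor
    · exact isRedSeq_snoc S L.reverse o hrs (hrem' ▸ hcond)
    · rw [remaining_append, hrem']
      show removeOp (S \ removeOp T o) o = S \ T
      cases o with
      | inl p =>
        obtain ⟨σ, τ⟩ := p
        have hc : CoredPair T σ τ := hhead
        exact diff_diff_cancel (by rintro x (rfl | rfl); exacts [hc.1, hc.2.1])
      | inr σ =>
        have hc : FreeSimplex T σ := hhead
        exact diff_diff_cancel (by rintro x rfl; exact hc.1)

/-- Proposition 1, reverse direction: the reverse of an exhausting coreduction-based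
removal sequence on a finite simplicial complex is an exhausting reduction-based
removal sequence, producing the same set of pairs and of single (critical)
simplices. -/
theorem coreduction_seq_reverse_is_reduction_seq {α : Type*} [DecidableEq α]
    (S : Set (Finset α)) (hS : IsComplex S) (hfin : S.Finite)
    (L : List (Op α)) (hL : IsCoredSeq S L) (hex : remaining S L = ∅) :
    IsRedSeq S L.reverse ∧ remaining S L.reverse = ∅ ∧
    (∀ p : Finset α × Finset α, Sum.inl p ∈ L.reverse ↔ Sum.inl p ∈ L) ∧
    (∀ σ : Finset α, Sum.inr σ ∈ L.reverse ↔ Sum.inr σ ∈ L) := by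
  obtain ⟨h1, h2⟩ := key_lemma S hS L S ⟨subset_rfl, fun _ _ τ hτ _ => hτ⟩ hL hex
  exact ⟨h1, by rw [h2, Set.diff_self], fun p => List.mem_reverse,
    fun σ => List.mem_reverse⟩
end

section
/- Let Σ be a finite simplicial complex and let L be a valid interleaved removal sequence on Σ. Suppose the operation at step i removes a reduction pair or a top simplex, and let Σ'_{i−1} and Σ'_i be the remaining families before and after step i. If (α, β) is a coreduction pair in Σ'_i, then (α, β) was already a coreduction pair in Σ'_{i−1}. (Remark 2, second part: in an interleaved-based algorithm, a reduction pair or top simplex removal cannot make a coreduction pair feasible.) -/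
open Finset

variable {α : Type*}

lemma ImmFace.ne' {σ τ : Finset α} (h : ImmFace σ τ) : σ ≠ τ := by
  intro he
  subst he
  exact Nat.succ_ne_self _ h.2

lemma immFace_insert [DecidableEq α] {x : α} {σ : Finset α} (hx : x ∉ σ) :
    ImmFace σ (insert x σ) :=
  ⟨Finset.subset_insert _ _, by rw [Finset.card_insert_of_notMem hx]⟩

/-- The operation `o` is admissible in an interleaved sequence on family `S`. -/
def OpOK (S : Set (Finset α)) : Op α → Prop
  | Sum.inl (σ, τ) => CoredPair S σ τ ∨ RedPair S σ τ
  | Sum.inr σ => FreeSimplex S σ ∨ TopSimplex S σ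

lemma isInterSeq_cons {S : Set (Finset α)} {o : Op α} {L : List (Op α)} :
    IsInterSeq S (o :: L) ↔ OpOK S o ∧ IsInterSeq (removeOp S o) L := by
  cases o with
  | inl p => obtain ⟨σ, τ⟩ := p; exact Iff.rfl
  | inr σ => exact Iff.rfl

/-- Invariant along an interleaved removal sequence: there is a set `C`
(the coreduction-removed simplices) such that `C ∪ S'` is closed under
nonempty subsets, and no remaining simplex has an immediate coface in `C`. -/
def RemInv (S₀ S' : Set (Finset α)) : Prop :=
  ∃ C : Set (Finset α),
    C ⊆ S₀ ∧ S' ⊆ S₀ ∧ (∀ c ∈ C, c ∉ S') ∧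
    (∀ θ ∈ C ∪ S', ∀ ρ : Finset α, ρ ⊆ θ → ρ.Nonempty → ρ ∈ C ∪ S') ∧
    (∀ σ ∈ S', ∀ c ∈ C, ¬ ImmFace σ c)

/-- If `(σ, τ)` is a reduction pair in `S'`, then `τ` has no immediate coface
in `C ∪ S'`. -/
lemma no_tau_coface [DecidableEq α] {C S' : Set (Finset α)}
    (hclose : ∀ θ ∈ C ∪ S', ∀ ρ : Finset α, ρ ⊆ θ → ρ.Nonempty → ρ ∈ C ∪ S')
    (hno : ∀ σ ∈ S', ∀ c ∈ C, ¬ ImmFace σ c)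
    {σ τ : Finset α} (hσS : σ ∈ S') (hτS : τ ∈ S')
    (himm : ImmFace σ τ) (hcbd : cbd S' σ = {τ}) :
    ∀ c ∈ C ∪ S', ¬ ImmFace τ c := by
  have K0 : ∀ c ∈ C ∪ S', ImmFace σ c → c = τ := by
    rintro c (hc | hc) h
    · exact absurd h (hno σ hσS c hc)
    · have : c ∈ cbd S' σ := ⟨hc, h⟩
      rw [hcbd] at this; exact this
  rintro c (hc | hc) h
  · exact hno τ hτS c hc h
  · obtain ⟨x, hxc, hxτ⟩ := Finset.exists_of_ssubset (h.1.ssubset_of_ne h.ne')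
    have hxσ : x ∉ σ := fun hx => hxτ (himm.1 hx)
    have he : insert x σ ∈ C ∪ S' := by
      refine hclose c (Or.inr hc) _ ?_ (Finset.insert_nonempty _ _)
      exact Finset.insert_subset_iff.mpr ⟨hxc, himm.1.trans h.1⟩
    have := K0 _ he (immFace_insert hxσ)
    exact hxτ (this ▸ Finset.mem_insert_self x σ)

lemma inv_step [DecidableEq α] {S₀ S' : Set (Finset α)} (hInv : RemInv S₀ S')
    (o : Op α) (ho : OpOK S' o) : RemInv S₀ (removeOp S' o) := by
  obtain ⟨C, hCsub, hSsub, hdisj, hclose, hno⟩ := hInv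
  cases o with
  | inr σ =>
    cases ho with
    | inl hfree =>
      obtain ⟨hσS, hbd⟩ := hfree
      simp only [removeOp]
      refine ⟨C ∪ {σ}, ?_, fun x hx => hSsub hx.1, ?_, ?_, ?_⟩
      · rintro c (hc | rfl)
        · exact hCsub hc
        · exact hSsub hσS
      · rintro c (hc | rfl) hcS
        · exact hdisj c hc hcS.1
        · exact hcS.2 rfl
      · have E : (C ∪ {σ}) ∪ (S' \ {σ}) = C ∪ S' := by
          ext x
          simp only [Set.mem_union, Set.mem_diff, Set.mem_singleton_iff]
          constructor
          · rintro ((h | rfl) | ⟨h, _⟩)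
            · exact Or.inl h
            · exact Or.inr hσS
            · exact Or.inr h
          · rintro (h | h)
            · exact Or.inl (Or.inl h)
            · by_cases hx : x = σ
              · exact Or.inl (Or.inr hx)
              · exact Or.inr ⟨h, hx⟩
        show ∀ θ ∈ (C ∪ {σ}) ∪ (S' \ {σ}), _
        rw [E]; exact hclose
      · rintro ρ hρ c (hc | hceq) h
        · exact hno ρ hρ.1 c hc h
        · rw [hceq] at h
          have : ρ ∈ bd S' σ := ⟨hρ.1, h⟩
          rw [hbd] at this; exact this
    | inr htop =>
      obtain ⟨hσS, hcbd⟩ := htop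
      simp only [removeOp]
      refine ⟨C, hCsub, fun x hx => hSsub hx.1, fun c hc hcS => hdisj c hc hcS.1,
        ?_, fun ρ hρ c hc h => hno ρ hρ.1 c hc h⟩
      intro θ hθ ρ hρsub hρne
      have hθ' : θ ∈ C ∪ S' := by
        rcases hθ with h | h
        · exact Or.inl h
        · exact Or.inr h.1
      rcases hclose θ hθ' ρ hρsub hρne with h | h
      · exact Or.inl h
      · by_cases hρσ : ρ = σ
        · exfalso
          subst hρσ
          have hθne : θ ≠ ρ := by
            rcases hθ with h' | h'
            · rintro rfl; exact hdisj _ h' h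
            · rintro rfl; exact h'.2 rfl
          obtain ⟨w, hwθ, hwρ⟩ :=
            Finset.exists_of_ssubset (hρsub.ssubset_of_ne (Ne.symm hθne))
          have hmem : insert w ρ ∈ C ∪ S' := by
            refine hclose θ hθ' _ ?_ (Finset.insert_nonempty _ _)
            exact Finset.insert_subset_iff.mpr ⟨hwθ, hρsub⟩
          rcases hmem with h' | h'
          · exact hno ρ h _ h' (immFace_insert hwρ)
          · have : insert w ρ ∈ cbd S' ρ := ⟨h', immFace_insert hwρ⟩
            rw [hcbd] at this; exact this
        · exact Or.inr ⟨h, hρσ⟩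
  | inl p =>
    obtain ⟨σ, τ⟩ := p
    cases ho with
    | inl hcored =>
      obtain ⟨hσS, hτS, himm, hbd⟩ := hcored
      simp only [removeOp]
      refine ⟨C ∪ {σ, τ}, ?_, fun x hx => hSsub hx.1, ?_, ?_, ?_⟩
      · rintro c (hc | hc)
        · exact hCsub hc
        · rcases hc with rfl | rfl
          · exact hSsub hσS
          · exact hSsub hτS
      · rintro c (hc | hc) hcS
        · exact hdisj c hc hcS.1
        · exact hcS.2 hc
      · have E : (C ∪ {σ, τ}) ∪ (S' \ {σ, τ}) = C ∪ S' := by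
          ext x
          simp only [Set.mem_union, Set.mem_diff, Set.mem_insert_iff,
            Set.mem_singleton_iff]
          constructor
          · rintro ((h | (rfl | rfl)) | ⟨h, _⟩)
            · exact Or.inl h
            · exact Or.inr hσS
            · exact Or.inr hτS
            · exact Or.inr h
          · rintro (h | h)
            · exact Or.inl (Or.inl h)
            · by_cases hx : x = σ ∨ x = τ
              · exact Or.inl (Or.inr hx)
              · exact Or.inr ⟨h, hx⟩
        show ∀ θ ∈ (C ∪ {σ, τ}) ∪ (S' \ {σ, τ}), _
        rw [E]; exact hclose
      · rintro ρ hρ c (hc | hc) h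
        · exact hno ρ hρ.1 c hc h
        · simp only [Set.mem_insert_iff, Set.mem_singleton_iff] at hc
          rcases hc with hceq | hceq
          · -- c = σ : ρ is an immediate face of σ, remaining in S'
            rw [hceq] at h
            obtain ⟨w, hwτ, hwσ⟩ :=
              Finset.exists_of_ssubset (himm.1.ssubset_of_ne himm.ne')
            have hwρ : w ∉ ρ := fun hw => hwσ (h.1 hw)
            have hmem : insert w ρ ∈ C ∪ S' := by
              refine hclose τ (Or.inr hτS) _ ?_ (Finset.insert_nonempty _ _)
              exact Finset.insert_subset_iff.mpr ⟨hwτ, h.1.trans himm.1⟩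
            rcases hmem with h' | h'
            · exact hno ρ hρ.1 _ h' (immFace_insert hwρ)
            · have himmρτ : ImmFace (insert w ρ) τ := by
                refine ⟨Finset.insert_subset_iff.mpr ⟨hwτ, h.1.trans himm.1⟩, ?_⟩
                rw [Finset.card_insert_of_notMem hwρ]
                have h1 := h.2
                have h2 := himm.2
                omega
              have : insert w ρ ∈ bd S' τ := ⟨h', himmρτ⟩
              rw [hbd] at this
              exact hwσ (this ▸ Finset.mem_insert_self w ρ)
          · -- c = τ
            rw [hceq] at h
            have : ρ ∈ bd S' τ := ⟨hρ.1, h⟩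
            rw [hbd] at this
            exact hρ.2 (Or.inl this)
    | inr hred =>
      obtain ⟨hσS, hτS, himm, hcbd⟩ := hred
      simp only [removeOp]
      have Kτ := no_tau_coface hclose hno hσS hτS himm hcbd
      have K0 : ∀ c ∈ C ∪ S', ImmFace σ c → c = τ := by
        rintro c (hc | hc) h
        · exact absurd h (hno σ hσS c hc)
        · have : c ∈ cbd S' σ := ⟨hc, h⟩
          rw [hcbd] at this; exact this
      have K2 : ∀ θ ∈ C ∪ S', τ ⊆ θ → θ = τ := by
        intro θ hθ hsub
        by_contra hne
        obtain ⟨w, hwθ, hwτ⟩ :=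
          Finset.exists_of_ssubset (hsub.ssubset_of_ne (Ne.symm hne))
        have hmem : insert w τ ∈ C ∪ S' := by
          refine hclose θ hθ _ ?_ (Finset.insert_nonempty _ _)
          exact Finset.insert_subset_iff.mpr ⟨hwθ, hsub⟩
        exact Kτ _ hmem (immFace_insert hwτ)
      have K1 : ∀ θ ∈ C ∪ S', σ ⊆ θ → θ = σ ∨ θ = τ := by
        intro θ hθ hsub
        by_cases hne : θ = σ
        · exact Or.inl hne
        obtain ⟨w, hwθ, hwσ⟩ :=
          Finset.exists_of_ssubset (hsub.ssubset_of_ne (Ne.symm hne))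
        have hmem : insert w σ ∈ C ∪ S' := by
          refine hclose θ hθ _ ?_ (Finset.insert_nonempty _ _)
          exact Finset.insert_subset_iff.mpr ⟨hwθ, hsub⟩
        have : insert w σ = τ := K0 _ hmem (immFace_insert hwσ)
        exact Or.inr (K2 θ hθ (this ▸ Finset.insert_subset_iff.mpr ⟨hwθ, hsub⟩))
      refine ⟨C, hCsub, fun x hx => hSsub hx.1, fun c hc hcS => hdisj c hc hcS.1,
        ?_, fun ρ hρ c hc h => hno ρ hρ.1 c hc h⟩
      intro θ hθ ρ hρsub hρne
      have hθ' : θ ∈ C ∪ S' := by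
        rcases hθ with h | h
        · exact Or.inl h
        · exact Or.inr h.1
      have hθnot : θ ≠ σ ∧ θ ≠ τ := by
        rcases hθ with h' | h'
        · constructor
          · rintro rfl; exact hdisj _ h' hσS
          · rintro rfl; exact hdisj _ h' hτS
        · constructor
          · rintro rfl; exact h'.2 (Or.inl rfl)
          · rintro rfl; exact h'.2 (Or.inr rfl)
      rcases hclose θ hθ' ρ hρsub hρne with h | h
      · exact Or.inl h
      · by_cases hρσ : ρ = σ
        · subst hρσ
          rcases K1 θ hθ' hρsub with rfl | rfl
          · exact absurd rfl hθnot.1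
          · exact absurd rfl hθnot.2
        · by_cases hρτ : ρ = τ
          · subst hρτ
            exact absurd (K2 θ hθ' hρsub) hθnot.2
          · refine Or.inr ⟨h, ?_⟩
            rintro (rfl | rfl)
            · exact hρσ rfl
            · exact hρτ rfl

lemma isInterSeq_take : ∀ (L : List (Op α)) (S : Set (Finset α)) (n : ℕ),
    IsInterSeq S L → IsInterSeq S (L.take n)
  | [], _, n, h => by simpa using h
  | _ :: _, _, 0, _ => trivial
  | o :: L, S, n + 1, h => by
    rw [List.take_succ_cons]
    exact isInterSeq_cons.mpr ⟨(isInterSeq_cons.mp h).1,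
      isInterSeq_take L _ n (isInterSeq_cons.mp h).2⟩

lemma inv_remaining [DecidableEq α] :
    ∀ (L : List (Op α)) (S₀ S' : Set (Finset α)),
      RemInv S₀ S' → IsInterSeq S' L → RemInv S₀ (remaining S' L)
  | [], _, _, h, _ => h
  | o :: L, S₀, S', h, hseq => by
    have h1 := isInterSeq_cons.mp hseq
    exact inv_remaining L S₀ _ (inv_step h o h1.1) h1.2

lemma remaining_take_succ {S : Set (Finset α)} {L : List (Op α)} {i : ℕ} {o : Op α}
    (hi : L[i]? = some o) :
    remaining S (L.take (i + 1)) = removeOp (remaining S (L.take i)) o := by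
  rw [List.take_succ, hi]
  simp [remaining, List.foldl_append]

/-- Remark 2, second part: in an interleaved-based algorithm, removing a reduction
pair or a top simplex cannot make a coreduction pair feasible. -/
theorem reduction_removal_no_new_coreduction {α : Type*} [DecidableEq α]
    (S : Set (Finset α)) (hS : IsComplex S) (hfin : S.Finite)
    (L : List (Op α)) (hL : IsInterSeq S L)
    (i : ℕ) (o : Op α) (hi : L[i]? = some o)
    (hcase :
      (∃ σ' τ', o = Sum.inl (σ', τ') ∧ RedPair (remaining S (L.take i)) σ' τ') ∨
      (∃ σ', o = Sum.inr σ' ∧ TopSimplex (remaining S (L.take i)) σ'))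
    (a b : Finset α) (hcored : CoredPair (remaining S (L.take (i + 1))) a b) :
    CoredPair (remaining S (L.take i)) a b := by
  have hbase : RemInv S S := by
    refine ⟨∅, Set.empty_subset _, subset_rfl, by simp, ?_, by simp⟩
    intro θ hθ ρ hρ hne
    rcases hθ with h | h
    · exact absurd h (Set.notMem_empty _)
    · exact Or.inr (hS.2 θ h ρ hρ hne)
  set S' := remaining S (L.take i) with hS'def
  have hInv : RemInv S S' := inv_remaining _ _ _ hbase (isInterSeq_take L S i hL)
  obtain ⟨C, hCsub, hSsub, hdisj, hclose, hno⟩ := hInv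
  rw [remaining_take_succ hi] at hcored
  obtain ⟨haS, hbS, hab, hbd⟩ := hcored
  rcases hcase with ⟨σ', τ', rfl, hred⟩ | ⟨σ', rfl, htop⟩
  · -- reduction pair removal
    obtain ⟨hσS, hτS, himm, hcbd⟩ := hred
    have haS' : a ∈ S' := haS.1
    have hbS' : b ∈ S' := hbS.1
    refine ⟨haS', hbS', hab, ?_⟩
    ext f
    simp only [Set.mem_singleton_iff]
    constructor
    · rintro ⟨hfS, hfb⟩
      by_cases hf'' : f ∈ removeOp S' (Sum.inl (σ', τ'))
      · have : f ∈ bd (removeOp S' (Sum.inl (σ', τ'))) b := ⟨hf'', hfb⟩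
        rw [hbd] at this; exact this
      · exfalso
        have hfστ : f = σ' ∨ f = τ' := by
          by_contra hc
          push_neg at hc
          exact hf'' ⟨hfS, by rintro (rfl | rfl); exacts [hc.1 rfl, hc.2 rfl]⟩
        rcases hfστ with rfl | rfl
        · -- f = σ' : b would be the unique coface τ', but b remains
          have : b ∈ cbd S' f := ⟨hbS', hfb⟩
          rw [hcbd] at this
          exact hbS.2 (Or.inr this)
        · -- f = τ' : τ' has no immediate coface in C ∪ S'
          exact no_tau_coface hclose hno hσS hτS himm hcbd b (Or.inr hbS') hfb
    · rintro rfl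
      exact ⟨haS', hab⟩
  · -- top simplex removal
    obtain ⟨hσS, hcbd⟩ := htop
    have haS' : a ∈ S' := haS.1
    have hbS' : b ∈ S' := hbS.1
    refine ⟨haS', hbS', hab, ?_⟩
    ext f
    simp only [Set.mem_singleton_iff]
    constructor
    · rintro ⟨hfS, hfb⟩
      by_cases hf'' : f ∈ removeOp S' (Sum.inr σ')
      · have : f ∈ bd (removeOp S' (Sum.inr σ')) b := ⟨hf'', hfb⟩
        rw [hbd] at this; exact this
      · exfalso
        have hfσ : f = σ' := by
          by_contra hc
          exact hf'' ⟨hfS, hc⟩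
        subst hfσ
        have : b ∈ cbd S' f := ⟨hbS', hfb⟩
        rw [hcbd] at this
        exact this
    · rintro rfl
      exact ⟨haS', hab⟩
end
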